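/- Let τ ≥ 1 and let u₀, u₁, …, u_M (M ≥ 1) be strings, each of length 2τ, such that for every i < M the concatenation uᵢ ++ u_{i+1} has some period of length at most τ. Then per(u₀) (the smallest period of u₀) is a period of the full concatenation u₀ ++ u₁ ++ ⋯ ++ u_M. -/

import Mathlib

/-- `p` is a period of the string `S`: `0 < p ≤ |S|` and characters `p` apart agree. -/
def IsPeriod {α : Type*} (S : List α) (p : ℕ) : Prop :=
  0 < p ∧ p ≤ S.length ∧ ∀ k < S.length - p, S[k]? = S[k + p]?

/-- `per S` is the smallest period of `S`. -/
noncomputable def per {α : Type*} (S : List α) : ℕ := sInf {p | IsPeriod S p}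

namespace Stmt6Aux

variable {α : Type*}

theorem isPeriod_def (S : List α) (p : ℕ) :
    IsPeriod S p ↔ 0 < p ∧ p ≤ S.length ∧ ∀ k, k + p < S.length → S[k]? = S[k + p]? := by
  unfold IsPeriod
  constructor <;> rintro ⟨h1, h2, h3⟩ <;> exact ⟨h1, h2, fun k hk => h3 k (by omega)⟩

theorem period_prefix {A B : List α} {p : ℕ} (h : IsPeriod (A ++ B) p) (hp : p ≤ A.length) :
    IsPeriod A p := by
  rw [isPeriod_def] at h ⊢
  obtain ⟨h1, _, h3⟩ := h
  refine ⟨h1, hp, fun k hk => ?_⟩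
  have := h3 k (by simp only [List.length_append]; omega)
  rwa [List.getElem?_append_left (by omega), List.getElem?_append_left (by omega)] at this

theorem period_suffix {A B : List α} {p : ℕ} (h : IsPeriod (A ++ B) p) (hp : p ≤ B.length) :
    IsPeriod B p := by
  rw [isPeriod_def] at h ⊢
  obtain ⟨h1, _, h3⟩ := h
  refine ⟨h1, hp, fun k hk => ?_⟩
  have := h3 (A.length + k) (by simp only [List.length_append]; omega)
  rwa [List.getElem?_append_right (by omega), List.getElem?_append_right (by omega),
    Nat.add_sub_cancel_left, show A.length + k + p - A.length = k + p from by omega] at this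

theorem isPeriod_reverse {S : List α} {p : ℕ} (h : IsPeriod S p) : IsPeriod S.reverse p := by
  rw [isPeriod_def] at h ⊢
  obtain ⟨h1, h2, h3⟩ := h
  rw [List.length_reverse]
  refine ⟨h1, h2, fun k hk => ?_⟩
  rw [List.getElem?_reverse (by omega), List.getElem?_reverse (by omega)]
  have := h3 (S.length - 1 - (k + p)) (by omega)
  rw [show S.length - 1 - (k + p) + p = S.length - 1 - k from by omega] at this
  exact this.symm

theorem isPeriod_reverse_iff {S : List α} {p : ℕ} : IsPeriod S.reverse p ↔ IsPeriod S p := by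
  constructor
  · intro h; simpa using isPeriod_reverse h
  · exact isPeriod_reverse

theorem period_sub {S : List α} {p q : ℕ} (hq : IsPeriod S q) (hp : IsPeriod S p)
    (hlt : q < p) (hsum : p + q ≤ S.length) : IsPeriod S (p - q) := by
  rw [isPeriod_def] at hq hp ⊢
  obtain ⟨hq1, hq2, hq3⟩ := hq
  obtain ⟨hp1, hp2, hp3⟩ := hp
  refine ⟨by omega, by omega, fun k hk => ?_⟩
  by_cases hcase : k + p < S.length
  · have e1 := hp3 k hcase
    have e2 := hq3 (k + (p - q)) (by omega)
    rw [show k + (p - q) + q = k + p from by omega] at e2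
    rw [e1, ← e2]
  · have hk2 : q ≤ k := by omega
    have e1 := hq3 (k - q) (by omega)
    rw [show k - q + q = k from by omega] at e1
    have e2 := hp3 (k - q) (by omega)
    rw [show k - q + p = k + (p - q) from by omega] at e2
    rw [← e1, e2]

theorem fine_wilf {S : List α} {p q : ℕ} (hp : IsPeriod S p) (hq : IsPeriod S q)
    (hsum : p + q ≤ S.length) : IsPeriod S (Nat.gcd p q) := by
  rcases Nat.lt_trichotomy p q with h | h | h
  · have hps : IsPeriod S (q - p) := period_sub hp hq h (by omega)
    have : Nat.gcd p (q - p) = Nat.gcd p q := by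
      rw [Nat.gcd_comm p (q - p), Nat.gcd_comm p q, Nat.gcd_sub_self_left (by omega)]
    rw [← this]
    exact fine_wilf hp hps (by omega)
  · rw [h, Nat.gcd_self]; exact hq
  · have hps : IsPeriod S (p - q) := period_sub hq hp h (by omega)
    have : Nat.gcd (p - q) q = Nat.gcd p q := Nat.gcd_sub_self_left (by omega)
    rw [← this]
    exact fine_wilf hps hq (by omega)
termination_by p + q
decreasing_by
  · have := hp.1; omega
  · have := hq.1; omega

theorem per_isPeriod {S : List α} (h : ∃ p, IsPeriod S p) : IsPeriod S (per S) :=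
  Nat.sInf_mem h

theorem per_le {S : List α} {p : ℕ} (h : IsPeriod S p) : per S ≤ p :=
  Nat.sInf_le h

theorem per_dvd {S : List α} {p : ℕ} (hp : IsPeriod S p) (hs : p + per S ≤ S.length) :
    per S ∣ p := by
  have hper : IsPeriod S (per S) := per_isPeriod ⟨p, hp⟩
  have hg : IsPeriod S (Nat.gcd p (per S)) := fine_wilf hp hper hs
  have h1 : per S ≤ Nat.gcd p (per S) := per_le hg
  have h2 : Nat.gcd p (per S) ≤ per S := Nat.le_of_dvd hper.1 (Nat.gcd_dvd_right _ _)
  have : Nat.gcd p (per S) = per S := le_antisymm h2 h1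
  rw [← this]
  exact Nat.gcd_dvd_left _ _

theorem chain {A : List α} {q : ℕ} (h : IsPeriod A q) :
    ∀ t a, a + t * q < A.length → A[a]? = A[a + t * q]? := by
  rw [isPeriod_def] at h
  obtain ⟨h1, h2, h3⟩ := h
  intro t
  induction t with
  | zero => intro a _; simp
  | succ t ih =>
    intro a ha
    have hm : (t + 1) * q = t * q + q := by ring
    have e1 := h3 a (by omega)
    have e2 := ih (a + q) (by omega)
    rw [show a + q + t * q = a + (t + 1) * q from by omega] at e2
    rw [e1, e2]

theorem period_div_prefix {A B : List α} {p q : ℕ} (h : IsPeriod (A ++ B) p)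
    (hqA : IsPeriod A q) (hdvd : q ∣ p) (hpA : p ≤ A.length) : IsPeriod (A ++ B) q := by
  rw [isPeriod_def] at h ⊢
  obtain ⟨hp1, hp2, hp3⟩ := h
  have hq1 : 0 < q := hqA.1
  have hqp : q ≤ p := Nat.le_of_dvd hp1 hdvd
  refine ⟨hq1, by omega, ?_⟩
  intro k
  induction k using Nat.strong_induction_on with
  | _ k ih =>
    intro hk
    by_cases hA : k + q < A.length
    · rw [List.getElem?_append_left (by omega), List.getElem?_append_left (by omega)]
      rw [isPeriod_def] at hqA
      exact hqA.2.2 k hA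
    · by_cases hkp : p ≤ k
      · have e1 := hp3 (k - p) (by omega)
        rw [show k - p + p = k from by omega] at e1
        have e2 := hp3 (k - p + q) (by omega)
        rw [show k - p + q + p = k + q from by omega] at e2
        rw [← e1, ← e2]
        exact ih (k - p) (by omega) (by omega)
      · -- p - q <= k < p, and k + q >= A.length >= p
        obtain ⟨c, hc⟩ := hdvd
        have hc0 : c ≠ 0 := by rintro rfl; simp at hc; omega
        obtain ⟨c', rfl⟩ : ∃ c', c = c' + 1 := ⟨c - 1, by omega⟩
        have hmm : c' * q + q = p := by rw [hc]; ring
        have e2 := hp3 (k + q - p) (by omega)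
        rw [show k + q - p + p = k + q from by omega] at e2
        rw [← e2]
        have hch := chain hqA c' (k + q - p) (by omega)
        rw [show k + q - p + c' * q = k from by omega] at hch
        rw [List.getElem?_append_left (by omega), List.getElem?_append_left (by omega)]
        exact hch.symm

theorem period_div_suffix {A B : List α} {p q : ℕ} (h : IsPeriod (A ++ B) p)
    (hqB : IsPeriod B q) (hdvd : q ∣ p) (hpB : p ≤ B.length) : IsPeriod (A ++ B) q := by
  rw [← isPeriod_reverse_iff] at h ⊢
  rw [List.reverse_append] at h ⊢
  exact period_div_prefix h (isPeriod_reverse hqB) hdvd (by simpa using hpB)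

theorem period_glue {X Y Z : List α} {q : ℕ} (h1 : IsPeriod (X ++ Y) q)
    (h2 : IsPeriod (Y ++ Z) q) (hq : q ≤ Y.length) : IsPeriod (X ++ (Y ++ Z)) q := by
  rw [isPeriod_def] at h1 h2 ⊢
  obtain ⟨hq1, hql1, h1'⟩ := h1
  obtain ⟨_, _, h2'⟩ := h2
  have lX : (X ++ Y).length = X.length + Y.length := List.length_append
  have lT : (X ++ (Y ++ Z)).length = X.length + (Y.length + Z.length) := by
    simp [List.length_append]
  have key1 : ∀ j, j < X.length + Y.length → (X ++ (Y ++ Z))[j]? = (X ++ Y)[j]? := by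
    intro j hj
    rw [← List.append_assoc]
    exact List.getElem?_append_left (by rw [List.length_append]; omega)
  have key2 : ∀ j, X.length ≤ j → (X ++ (Y ++ Z))[j]? = (Y ++ Z)[j - X.length]? :=
    fun j hj => List.getElem?_append_right hj
  refine ⟨hq1, by omega, fun k hk => ?_⟩
  rw [lT] at hk
  by_cases hc : k + q < X.length + Y.length
  · rw [key1 k (by omega), key1 (k + q) (by omega)]
    exact h1' k (by rw [lX]; omega)
  · have hkX : X.length ≤ k := by omega
    rw [key2 k (by omega), key2 (k + q) (by omega)]
    have := h2' (k - X.length) (by rw [List.length_append]; omega)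
    rwa [show k - X.length + q = k + q - X.length from by omega] at this

theorem pair {τ : ℕ} {A B : List α} (hτ : 1 ≤ τ) (hA : A.length = 2 * τ)
    (hB : B.length = 2 * τ) (hex : ∃ p ≤ τ, IsPeriod (A ++ B) p) :
    per B = per A ∧ IsPeriod (A ++ B) (per A) ∧ per A ≤ τ := by
  obtain ⟨p, hpτ, hper⟩ := hex
  have hp0 : 0 < p := hper.1
  have hpA : IsPeriod A p := period_prefix hper (by omega)
  have hpB : IsPeriod B p := period_suffix hper (by omega)
  have hqA : IsPeriod A (per A) := per_isPeriod ⟨p, hpA⟩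
  have hqAle : per A ≤ p := per_le hpA
  have hqB : IsPeriod B (per B) := per_isPeriod ⟨p, hpB⟩
  have hqBle : per B ≤ p := per_le hpB
  have hdvdA : per A ∣ p := per_dvd hpA (by omega)
  have hdvdB : per B ∣ p := per_dvd hpB (by omega)
  have hABqA : IsPeriod (A ++ B) (per A) := period_div_prefix hper hqA hdvdA (by omega)
  have hABqB : IsPeriod (A ++ B) (per B) := period_div_suffix hper hqB hdvdB (by omega)
  have h1 : per A ≤ per B := per_le (period_prefix hABqB (by omega))
  have h2 : per B ≤ per A := per_le (period_suffix hABqA (by omega))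
  exact ⟨le_antisymm h2 h1, hABqA, by omega⟩

end Stmt6Aux

open Stmt6Aux in
theorem stmt_6 {α : Type*} [DecidableEq α] (τ M : ℕ) (hτ : 1 ≤ τ) (hM : 1 ≤ M)
    (u : ℕ → List α)
    (hlen : ∀ i ≤ M, (u i).length = 2 * τ)
    (hp : ∀ i < M, ∃ p ≤ τ, IsPeriod (u i ++ u (i + 1)) p) :
    IsPeriod (((List.range (M + 1)).map u).flatten) (per (u 0)) := by
  set q := per (u 0) with hq
  have pairAll : ∀ i < M, per (u (i + 1)) = per (u i) ∧
      IsPeriod (u i ++ u (i + 1)) (per (u i)) ∧ per (u i) ≤ τ :=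
    fun i hi => pair hτ (hlen i (by omega)) (hlen (i + 1) (by omega)) (hp i hi)
  have perEq : ∀ i ≤ M, per (u i) = q := by
    intro i
    induction i with
    | zero => intro _; rfl
    | succ i ih =>
      intro hi
      rw [(pairAll i (by omega)).1, ih (by omega)]
  have pairQ : ∀ i < M, IsPeriod (u i ++ u (i + 1)) q := by
    intro i hi
    have := (pairAll i hi).2.1
    rwa [perEq i (by omega)] at this
  have hqτ : q ≤ τ := (pairAll 0 (by omega)).2.2
  have main : ∀ j, j + 1 ≤ M → IsPeriod (((List.range (j + 2)).map u).flatten) q := by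
    intro j
    induction j with
    | zero =>
      intro _
      have : ((List.range 2).map u).flatten = u 0 ++ u 1 := by
        simp [List.range_succ]
      rw [this]
      exact pairQ 0 (by omega)
    | succ j ih =>
      intro hj
      have hsplit : ((List.range (j + 3)).map u).flatten =
          ((List.range (j + 1)).map u).flatten ++ (u (j + 1) ++ u (j + 2)) := by
        rw [show j + 3 = (j + 2) + 1 from rfl, List.range_succ,
            show j + 2 = (j + 1) + 1 from rfl, List.range_succ]
        simp [List.append_assoc]
      rw [hsplit]
      have h1 : IsPeriod (((List.range (j + 1)).map u).flatten ++ u (j + 1)) q := by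
        have : ((List.range (j + 2)).map u).flatten =
            ((List.range (j + 1)).map u).flatten ++ u (j + 1) := by
          rw [show j + 2 = (j + 1) + 1 from rfl, List.range_succ]; simp
        rw [← this]
        exact ih (by omega)
      exact period_glue h1 (pairQ (j + 1) (by omega))
        (by rw [hlen (j + 1) (by omega)]; omega)
  obtain ⟨M', rfl⟩ : ∃ M', M = M' + 1 := ⟨M - 1, by omega⟩
  exact main M' (by omega)
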